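/- arXiv:2501.04901 — 3 statements merged into one kernel-verified Lean document; each statement's English description precedes it below -/
import Mathlib

section
/- Consider two independent models with success probabilities p₁, p₂ ∈ (0,1) over K ≥ 2 classes, where an incorrect model predicts each of the K-1 wrong classes with probability (1-p_j)/(K-1). Under maximum-likelihood aggregation (which, when the two predictions disagree, follows the model with higher success probability, assuming p₁ ≠ p₂), the correctness probability of the ensemble {l₁, l₂} equals max{p₁, p₂}. -/
open Finset
open scoped Classical

/-- Probability that a model with success probability `p` predicts class `c`
when the ground truth is `q`: `p` if `c = q`, and `(1-p)/(K-1)` otherwise. -/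
noncomputable def wgt (K : ℕ) (q : Fin K) (p : ℝ) (c : Fin K) : ℝ :=
  if c = q then p else (1 - p) / ((K : ℝ) - 1)

/-- Belief of class `d` under observation `φ` for models with success probabilities `p`. -/
noncomputable def blf {n K : ℕ} (p : Fin n → ℝ) (φ : Fin n → Fin K) (d : Fin K) : ℝ :=
  ∏ i, if φ i = d then p i * ((K : ℝ) - 1) / (1 - p i) else 1

/-- Maximum-likelihood aggregation of observation `φ` yields the ground truth `q`:
`q` is predicted by some model and has strictly maximal belief among predicted classes. -/
def corr {n K : ℕ} (q : Fin K) (p : Fin n → ℝ) (φ : Fin n → Fin K) : Prop :=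
  (∃ i, φ i = q) ∧ ∀ d : Fin K, (∃ i, φ i = d) → d ≠ q → blf p φ d < blf p φ q

/-- Correctness probability of the ensemble of `n` independent models. -/
noncomputable def PA {n : ℕ} (K : ℕ) (q : Fin K) (p : Fin n → ℝ) : ℝ :=
  ∑ φ : Fin n → Fin K, (∏ i, wgt K q (p i) (φ i)) * (if corr q p φ then 1 else 0)

lemma blf_two {K : ℕ} (p₁ p₂ : ℝ) (a b d : Fin K) :
    blf ![p₁, p₂] ![a, b] d =
      (if a = d then p₁ * ((K : ℝ) - 1) / (1 - p₁) else 1) *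
      (if b = d then p₂ * ((K : ℝ) - 1) / (1 - p₂) else 1) := by
  simp [blf, Fin.prod_univ_two]
  by_cases ha : a = d <;> by_cases hb : b = d <;> simp [ha, hb]

lemma ratio_lt_ratio (K : ℕ) (hK : 2 ≤ K) {x y : ℝ} (hx0 : 0 < x) (hx1 : x < 1)
    (hy0 : 0 < y) (hy1 : y < 1) :
    x * ((K : ℝ) - 1) / (1 - x) < y * ((K : ℝ) - 1) / (1 - y) ↔ x < y := by
  have hc : (0:ℝ) < (K:ℝ) - 1 := by
    have h2 : (2:ℝ) ≤ (K:ℝ) := by exact_mod_cast hK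
    linarith
  rw [div_lt_div_iff₀ (by linarith) (by linarith)]
  constructor <;> intro h <;> nlinarith

/-- The correctness probability of a two-model ensemble under maximum-likelihood
aggregation equals `max p₁ p₂`. -/
theorem PA_two_models (K : ℕ) (hK : 2 ≤ K) (q : Fin K) (p₁ p₂ : ℝ)
    (h₁ : p₁ ∈ Set.Ioo (0 : ℝ) 1) (h₂ : p₂ ∈ Set.Ioo (0 : ℝ) 1) (hne : p₁ ≠ p₂) :
    PA K q ![p₁, p₂] = max p₁ p₂ := by
  obtain ⟨h1a, h1b⟩ := h₁
  obtain ⟨h2a, h2b⟩ := h₂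
  have hc : (0:ℝ) < (K:ℝ) - 1 := by
    have h2 : (2:ℝ) ≤ (K:ℝ) := by exact_mod_cast hK
    linarith
  set r1 : ℝ := p₁ * ((K:ℝ)-1) / (1 - p₁) with hr1def
  set r2 : ℝ := p₂ * ((K:ℝ)-1) / (1 - p₂) with hr2def
  have hriff : r1 < r2 ↔ p₁ < p₂ := ratio_lt_ratio K hK h1a h1b h2a h2b
  have hriff' : r2 < r1 ↔ p₂ < p₁ := ratio_lt_ratio K hK h2a h2b h1a h1b
  -- corr characterizations
  have corr_qq : corr q ![p₁, p₂] ![q, q] := by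
    refine ⟨⟨0, rfl⟩, fun d hd hdq => ?_⟩
    exfalso
    rcases hd with ⟨i, hi⟩
    fin_cases i <;> simp at hi <;> exact hdq hi.symm
  have corr_qb : ∀ b : Fin K, b ≠ q → (corr q ![p₁, p₂] ![q, b] ↔ r2 < r1) := by
    intro b hb
    have hbq : blf ![p₁, p₂] ![q, b] q = r1 := by
      rw [blf_two]; simp [hb]; rfl
    have hbb : blf ![p₁, p₂] ![q, b] b = r2 := by
      rw [blf_two]; simp [Ne.symm hb]; rfl
    constructor
    · intro h
      have := h.2 b ⟨1, rfl⟩ hb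
      rwa [hbq, hbb] at this
    · intro h
      refine ⟨⟨0, rfl⟩, fun d hd hdq => ?_⟩
      rcases hd with ⟨i, hi⟩
      fin_cases i
      · simp at hi; exact absurd hi.symm hdq
      · simp at hi; subst hi; rw [hbq, hbb]; exact h
  have corr_aq : ∀ a : Fin K, a ≠ q → (corr q ![p₁, p₂] ![a, q] ↔ r1 < r2) := by
    intro a ha
    have hbq : blf ![p₁, p₂] ![a, q] q = r2 := by
      rw [blf_two]; simp [ha]; rfl
    have hba : blf ![p₁, p₂] ![a, q] a = r1 := by
      rw [blf_two]; simp [Ne.symm ha]; rfl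
    constructor
    · intro h
      have := h.2 a ⟨0, rfl⟩ ha
      rwa [hbq, hba] at this
    · intro h
      refine ⟨⟨1, rfl⟩, fun d hd hdq => ?_⟩
      rcases hd with ⟨i, hi⟩
      fin_cases i
      · simp at hi; subst hi; rw [hbq, hba]; exact h
      · simp at hi; exact absurd hi.symm hdq
  have corr_ab : ∀ a b : Fin K, a ≠ q → b ≠ q → ¬ corr q ![p₁, p₂] ![a, b] := by
    intro a b ha hb h
    rcases h.1 with ⟨i, hi⟩
    fin_cases i <;> simp_all
  -- rewrite PA as a double sum
  have hPA : PA K q ![p₁, p₂] = ∑ a : Fin K, ∑ b : Fin K,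
      (wgt K q p₁ a * wgt K q p₂ b) * (if corr q ![p₁, p₂] ![a, b] then 1 else 0) := by
    rw [PA]
    rw [Fintype.sum_equiv (piFinTwoEquiv (fun _ => Fin K))
      (fun φ => (∏ i, wgt K q (![p₁, p₂] i) (φ i)) * (if corr q ![p₁, p₂] φ then 1 else 0))
      (fun x => (wgt K q p₁ x.1 * wgt K q p₂ x.2) *
        (if corr q ![p₁, p₂] ![x.1, x.2] then 1 else 0))
      (by
        intro φ
        have hφ : ![φ 0, φ 1] = φ := by
          funext i; fin_cases i <;> rfl
        simp only [piFinTwoEquiv_apply, hφ, Fin.prod_univ_two]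
        norm_num)]
    rw [Fintype.sum_prod_type]
  rw [hPA]
  have hwq1 : wgt K q p₁ q = p₁ := by simp [wgt]
  have hwq2 : wgt K q p₂ q = p₂ := by simp [wgt]
  have hw1 : ∀ a : Fin K, a ≠ q → wgt K q p₁ a = (1 - p₁) / ((K:ℝ) - 1) := by
    intro a ha; simp [wgt, ha]
  have hw2 : ∀ b : Fin K, b ≠ q → wgt K q p₂ b = (1 - p₂) / ((K:ℝ) - 1) := by
    intro b hb; simp [wgt, hb]
  have hcard : ((univ.erase q).card : ℝ) = (K:ℝ) - 1 := by
    rw [Finset.card_erase_of_mem (mem_univ q), Finset.card_univ, Fintype.card_fin]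
    have : 1 ≤ K := by omega
    push_cast [Nat.cast_sub this]
    ring
  set c1 : ℝ := if r2 < r1 then 1 else 0 with hc1def
  set c2 : ℝ := if r1 < r2 then 1 else 0 with hc2def
  have hSq : (∑ b : Fin K, (wgt K q p₁ q * wgt K q p₂ b) *
      (if corr q ![p₁, p₂] ![q, b] then 1 else 0))
      = p₁ * p₂ + ((K:ℝ) - 1) * (p₁ * ((1 - p₂) / ((K:ℝ) - 1)) * c1) := by
    rw [← Finset.add_sum_erase _ _ (mem_univ q)]
    have h1 : (wgt K q p₁ q * wgt K q p₂ q) *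
        (if corr q ![p₁, p₂] ![q, q] then 1 else 0) = p₁ * p₂ := by
      rw [hwq1, hwq2, if_pos corr_qq, mul_one]
    rw [h1]
    have hterm : ∀ b ∈ univ.erase q, (wgt K q p₁ q * wgt K q p₂ b) *
        (if corr q ![p₁, p₂] ![q, b] then (1:ℝ) else 0)
        = p₁ * ((1 - p₂) / ((K:ℝ) - 1)) * c1 := by
      intro b hb
      have hbq : b ≠ q := Finset.ne_of_mem_erase hb
      rw [hwq1, hw2 b hbq]
      have : (if corr q ![p₁, p₂] ![q, b] then (1:ℝ) else 0) = c1 := by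
        rw [hc1def]
        by_cases h : r2 < r1
        · rw [if_pos ((corr_qb b hbq).2 h), if_pos h]
        · rw [if_neg (fun hcc => h ((corr_qb b hbq).1 hcc)), if_neg h]
      rw [this]
    rw [Finset.sum_congr rfl hterm, Finset.sum_const, nsmul_eq_mul, hcard]
  have hSa : ∀ a : Fin K, a ≠ q → (∑ b : Fin K, (wgt K q p₁ a * wgt K q p₂ b) *
      (if corr q ![p₁, p₂] ![a, b] then 1 else 0))
      = (1 - p₁) / ((K:ℝ) - 1) * p₂ * c2 := by
    intro a ha
    rw [← Finset.add_sum_erase _ _ (mem_univ q)]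
    have h1 : (wgt K q p₁ a * wgt K q p₂ q) *
        (if corr q ![p₁, p₂] ![a, q] then 1 else 0)
        = (1 - p₁) / ((K:ℝ) - 1) * p₂ * c2 := by
      rw [hwq2, hw1 a ha, hc2def]
      by_cases h : r1 < r2
      · rw [if_pos ((corr_aq a ha).2 h), if_pos h]
      · rw [if_neg (fun hcc => h ((corr_aq a ha).1 hcc)), if_neg h]
    rw [h1, Finset.sum_eq_zero, add_zero]
    intro b hb
    rw [if_neg (corr_ab a b ha (Finset.ne_of_mem_erase hb)), mul_zero]
  rw [← Finset.add_sum_erase _ _ (mem_univ q), hSq,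
    Finset.sum_congr rfl (fun a ha => hSa a (Finset.ne_of_mem_erase ha)),
    Finset.sum_const, nsmul_eq_mul, hcard]
  rcases lt_or_gt_of_ne hne with h | h
  · have hc1 : c1 = 0 := by rw [hc1def, if_neg (by rw [hriff']; exact not_lt.2 h.le)]
    have hc2 : c2 = 1 := by rw [hc2def, if_pos (hriff.2 h)]
    rw [hc1, hc2, max_eq_right h.le]
    field_simp
    ring
  · have hc1 : c1 = 1 := by rw [hc1def, if_pos (hriff'.2 h)]
    have hc2 : c2 = 0 := by rw [hc2def, if_neg (by rw [hriff]; exact not_lt.2 h.le)]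
    rw [hc1, hc2, max_eq_left h.le]
    field_simp
    ring
end

section
/- Let K ≥ 2 and p₁, p₂, p₃ ∈ (0,1) satisfy p₁ > p₂, p₁ > p₃, and (p₂ p₃ (K-1))/((1-p₂)(1-p₃)) > p₁/(1-p₁). Then the correctness probability of the three-model ensemble under maximum-likelihood aggregation is PA({l₁,l₂,l₃}) = p₁ - p₁(1-p₂)(1-p₃)/(K-1) + (1-p₁)p₂p₃, and this quantity is strictly greater than p₁. -/
open Finset
open scoped Classical

lemma sum_wgt (K : ℕ) (hK : 2 ≤ K) (q : Fin K) (p : ℝ) : ∑ c, wgt K q p c = 1 := by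
  have hK1 : (2:ℝ) ≤ (K:ℝ) := by exact_mod_cast hK
  have hne : (K:ℝ) - 1 ≠ 0 := by linarith
  have h : ∀ c : Fin K, wgt K q p c
      = (if c = q then p - (1-p)/((K:ℝ)-1) else 0) + (1-p)/((K:ℝ)-1) := by
    intro c; unfold wgt; by_cases h : c = q <;> simp [h]
  simp only [h]
  rw [Finset.sum_add_distrib, Finset.sum_ite_eq' univ q, Finset.sum_const, card_univ,
    Fintype.card_fin]
  simp only [mem_univ, if_true, nsmul_eq_mul]
  field_simp
  ring

lemma sum_wgt_mul_ind (K : ℕ) (q : Fin K) (p : ℝ) :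
    ∑ c, wgt K q p c * (if c = q then 1 else 0) = p := by
  have h : ∀ c : Fin K, wgt K q p c * (if c = q then 1 else 0) = if c = q then p else 0 := by
    intro c; unfold wgt; by_cases h : c = q <;> simp [h]
  simp only [h]
  rw [Finset.sum_ite_eq' univ q]
  simp

lemma sum_wgt_mul_indne (K : ℕ) (hK : 2 ≤ K) (q : Fin K) (p : ℝ) :
    ∑ c, wgt K q p c * (1 - (if c = q then 1 else 0)) = 1 - p := by
  have h : ∀ c : Fin K, wgt K q p c * (1 - (if c = q then 1 else 0))
      = wgt K q p c - wgt K q p c * (if c = q then 1 else 0) := by intro c; ring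
  simp only [h]
  rw [Finset.sum_sub_distrib, sum_wgt K hK q p, sum_wgt_mul_ind K q p]

lemma sum_wgt_diagJ (K : ℕ) (q : Fin K) (p : ℝ) (b : Fin K) :
    ∑ c, wgt K q p c * (if b = c ∧ ¬ b = q then 1 else 0)
      = if b = q then 0 else (1-p)/((K:ℝ)-1) := by
  by_cases hb : b = q
  · simp [hb]
  · have h : ∀ c : Fin K, wgt K q p c * (if b = c ∧ ¬ b = q then 1 else 0)
        = if c = b then (1-p)/((K:ℝ)-1) else 0 := by
      intro c; unfold wgt
      by_cases hc : c = b
      · subst hc; simp [hb]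
      · have : ¬ b = c := fun h => hc h.symm
        simp [hc, this]
    simp only [h]
    rw [Finset.sum_ite_eq' univ b]
    simp [hb]

lemma sum_wgt_off (K : ℕ) (hK : 2 ≤ K) (q : Fin K) (p r : ℝ) :
    ∑ b, wgt K q p b * (if b = q then 0 else r) = (1 - p) * r := by
  have hK1 : (2:ℝ) ≤ (K:ℝ) := by exact_mod_cast hK
  have hne : (K:ℝ) - 1 ≠ 0 := by linarith
  have h : ∀ b : Fin K, wgt K q p b * (if b = q then 0 else r)
      = ((1-p)/((K:ℝ)-1) * r) - (if b = q then ((1-p)/((K:ℝ)-1) * r) else 0) := by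
    intro b; unfold wgt; by_cases hb : b = q <;> simp [hb]
  simp only [h]
  rw [Finset.sum_sub_distrib, Finset.sum_const, Finset.sum_ite_eq' univ q, card_univ,
    Fintype.card_fin]
  simp only [mem_univ, if_true, nsmul_eq_mul]
  field_simp

lemma sum_triple (K : ℕ) (F : Fin K → Fin K → Fin K → ℝ) :
    ∑ φ : Fin 3 → Fin K, F (φ 0) (φ 1) (φ 2) = ∑ a, ∑ b, ∑ c, F a b c := by
  let e : (Fin 3 → Fin K) ≃ Fin K × Fin K × Fin K :=
    { toFun := fun φ => (φ 0, φ 1, φ 2)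
      invFun := fun x => ![x.1, x.2.1, x.2.2]
      left_inv := by intro φ; funext i; fin_cases i <;> simp
      right_inv := by intro x; simp }
  rw [← Equiv.sum_comp e.symm (fun φ => F (φ 0) (φ 1) (φ 2))]
  rw [Fintype.sum_prod_type]
  refine Finset.sum_congr rfl fun a _ => ?_
  rw [Fintype.sum_prod_type]
  simp [e]

lemma ind_identity {K : ℕ} (q x0 x1 x2 : Fin K) :
    (if (x0 = q ∧ (x1 = x2 → x1 = q)) ∨ (¬ x0 = q ∧ x1 = q ∧ x2 = q) then (1:ℝ) else 0)
      = (if x0 = q then (1:ℝ) else 0) * (1 - (if x1 = x2 ∧ ¬ x1 = q then (1:ℝ) else 0))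
        + (1 - (if x0 = q then (1:ℝ) else 0)) *
            ((if x1 = q then (1:ℝ) else 0) * (if x2 = q then (1:ℝ) else 0)) := by
  by_cases h0 : x0 = q <;> by_cases h1 : x1 = q <;> by_cases h2 : x2 = q <;>
    by_cases h12 : x1 = x2 <;> simp_all <;> norm_num

set_option maxHeartbeats 1000000 in
/-- Correctness probability of the three-model ensemble under maximum-likelihood
aggregation, when `p₁ > p₂`, `p₁ > p₃`, and the joint belief of models 2 and 3
exceeds that of model 1: `PA = p₁ - p₁(1-p₂)(1-p₃)/(K-1) + (1-p₁)p₂p₃ > p₁`. -/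
theorem PA_three_models (K : ℕ) (hK : 2 ≤ K) (q : Fin K) (p₁ p₂ p₃ : ℝ)
    (h₁ : p₁ ∈ Set.Ioo (0 : ℝ) 1) (h₂ : p₂ ∈ Set.Ioo (0 : ℝ) 1)
    (h₃ : p₃ ∈ Set.Ioo (0 : ℝ) 1)
    (h12 : p₂ < p₁) (h13 : p₃ < p₁)
    (hjoint : p₁ / (1 - p₁) < p₂ * p₃ * ((K : ℝ) - 1) / ((1 - p₂) * (1 - p₃))) :
    PA K q ![p₁, p₂, p₃]
        = p₁ - p₁ * (1 - p₂) * (1 - p₃) / ((K : ℝ) - 1) + (1 - p₁) * p₂ * p₃ ∧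
      p₁ < p₁ - p₁ * (1 - p₂) * (1 - p₃) / ((K : ℝ) - 1) + (1 - p₁) * p₂ * p₃ := by
  obtain ⟨hp1, hp1'⟩ := h₁
  obtain ⟨hp2, hp2'⟩ := h₂
  obtain ⟨hp3, hp3'⟩ := h₃
  have hK2 : (2:ℝ) ≤ (K:ℝ) := by exact_mod_cast hK
  have hKpos : (0:ℝ) < (K:ℝ) - 1 := by linarith
  have hKne : (K:ℝ) - 1 ≠ 0 := ne_of_gt hKpos
  have h1p1 : 0 < 1 - p₁ := by linarith
  have h1p2 : 0 < 1 - p₂ := by linarith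
  have h1p3 : 0 < 1 - p₃ := by linarith
  have hjoint' : p₁ * ((1 - p₂) * (1 - p₃)) < p₂ * p₃ * ((K:ℝ)-1) * (1 - p₁) := by
    rwa [div_lt_div_iff₀ h1p1 (by positivity)] at hjoint
  -- the belief factors
  set a₁ : ℝ := p₁ * ((K:ℝ)-1) / (1 - p₁) with ha₁
  set a₂ : ℝ := p₂ * ((K:ℝ)-1) / (1 - p₂) with ha₂
  set a₃ : ℝ := p₃ * ((K:ℝ)-1) / (1 - p₃) with ha₃
  have ha₁pos : 0 < a₁ := by rw [ha₁]; positivity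
  have ha₂pos : 0 < a₂ := by rw [ha₂]; positivity
  have ha₃pos : 0 < a₃ := by rw [ha₃]; positivity
  have ha21 : a₂ < a₁ := by
    rw [ha₂, ha₁, div_lt_div_iff₀ h1p2 h1p1]; nlinarith
  have ha31 : a₃ < a₁ := by
    rw [ha₃, ha₁, div_lt_div_iff₀ h1p3 h1p1]; nlinarith
  have ha1lt : a₁ < a₂ * a₃ := by
    have e : a₂ * a₃ = (p₂*p₃*((K:ℝ)-1)*((K:ℝ)-1)) / ((1-p₂)*(1-p₃)) := by
      rw [ha₂, ha₃]; field_simp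
    rw [e, ha₁, div_lt_div_iff₀ h1p1 (by positivity)]
    nlinarith
  have ha₂gt1 : 1 < a₂ := by nlinarith
  have ha₃gt1 : 1 < a₃ := by nlinarith
  have hblf : ∀ (φ : Fin 3 → Fin K) (d : Fin K), blf ![p₁,p₂,p₃] φ d =
      (if φ 0 = d then a₁ else 1) * (if φ 1 = d then a₂ else 1) *
        (if φ 2 = d then a₃ else 1) := by
    intro φ d
    unfold blf
    rw [Fin.prod_univ_three]
    simp only [Matrix.cons_val_zero, Matrix.cons_val_one, Matrix.head_cons, Matrix.cons_val_two,
      Matrix.tail_cons]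
    rfl
  -- characterization of correctness
  have corr_iff : ∀ φ : Fin 3 → Fin K,
      corr q ![p₁,p₂,p₃] φ ↔
        ((φ 0 = q ∧ (φ 1 = φ 2 → φ 1 = q)) ∨ (¬ φ 0 = q ∧ φ 1 = q ∧ φ 2 = q)) := by
    intro φ
    constructor
    · rintro ⟨hex, hmax⟩
      by_cases h0 : φ 0 = q
      · left
        refine ⟨h0, fun h12e => ?_⟩
        by_contra h1q
        have h2q : ¬ φ 2 = q := fun h => h1q (h12e.trans h)
        have h01 : ¬ φ 0 = φ 1 := fun h => h1q (h.symm.trans h0)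
        have hlt := hmax (φ 1) ⟨1, rfl⟩ h1q
        rw [hblf, hblf, if_pos h0, if_neg h1q, if_neg h2q, if_neg h01, if_pos rfl,
          if_pos h12e.symm] at hlt
        linarith
      · right
        refine ⟨h0, ?_⟩
        by_cases h1 : φ 1 = q
        · refine ⟨h1, ?_⟩
          by_contra h2
          have hlt := hmax (φ 0) ⟨0, rfl⟩ h0
          rw [hblf, hblf, if_pos rfl, if_neg h0, if_pos h1, if_neg h2] at hlt
          have hx : (1:ℝ) ≤ (if φ 1 = φ 0 then a₂ else 1) := by
            split <;> linarith
          have hy : (1:ℝ) ≤ (if φ 2 = φ 0 then a₃ else 1) := by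
            split <;> linarith
          have hm1 : a₁ ≤ a₁ * (if φ 1 = φ 0 then a₂ else 1) :=
            le_mul_of_one_le_right ha₁pos.le hx
          have hm2 : a₁ * (if φ 1 = φ 0 then a₂ else 1)
              ≤ a₁ * (if φ 1 = φ 0 then a₂ else 1) * (if φ 2 = φ 0 then a₃ else 1) :=
            le_mul_of_one_le_right (lt_of_lt_of_le ha₁pos hm1).le hy
          linarith
        · exfalso
          have h2 : φ 2 = q := by
            obtain ⟨i, hi⟩ := hex
            fin_cases i
            · exact absurd hi h0
            · exact absurd hi h1
            · exact hi
          have hlt := hmax (φ 0) ⟨0, rfl⟩ h0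
          rw [hblf, hblf, if_pos rfl, if_neg h0, if_neg h1, if_pos h2] at hlt
          have hx : (1:ℝ) ≤ (if φ 1 = φ 0 then a₂ else 1) := by
            split <;> linarith
          have hy : (1:ℝ) ≤ (if φ 2 = φ 0 then a₃ else 1) := by
            split <;> linarith
          have hm1 : a₁ ≤ a₁ * (if φ 1 = φ 0 then a₂ else 1) :=
            le_mul_of_one_le_right ha₁pos.le hx
          have hm2 : a₁ * (if φ 1 = φ 0 then a₂ else 1)
              ≤ a₁ * (if φ 1 = φ 0 then a₂ else 1) * (if φ 2 = φ 0 then a₃ else 1) :=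
            le_mul_of_one_le_right (lt_of_lt_of_le ha₁pos hm1).le hy
          linarith
    · rintro (⟨h0, himp⟩ | ⟨h0, h1, h2⟩)
      · refine ⟨⟨0, h0⟩, ?_⟩
        intro d hd hdq
        have h0d : ¬ φ 0 = d := fun h => hdq (h.symm.trans h0)
        rw [hblf, hblf, if_pos h0, if_neg h0d]
        have hb1 : (1:ℝ) ≤ (if φ 1 = q then a₂ else 1) := by split <;> linarith
        have hb2 : (1:ℝ) ≤ (if φ 2 = q then a₃ else 1) := by split <;> linarith
        have hR : a₁ ≤ a₁ * (if φ 1 = q then a₂ else 1) * (if φ 2 = q then a₃ else 1) := by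
          have hm1 : a₁ ≤ a₁ * (if φ 1 = q then a₂ else 1) :=
            le_mul_of_one_le_right ha₁pos.le hb1
          have hm2 : a₁ * (if φ 1 = q then a₂ else 1)
              ≤ a₁ * (if φ 1 = q then a₂ else 1) * (if φ 2 = q then a₃ else 1) :=
            le_mul_of_one_le_right (lt_of_lt_of_le ha₁pos hm1).le hb2
          linarith
        by_cases hd1 : φ 1 = d
        · have hd2 : ¬ φ 2 = d := fun hd2 => hdq (hd1.symm.trans (himp (hd1.trans hd2.symm)))
          rw [if_pos hd1, if_neg hd2]
          have e : (1:ℝ) * a₂ * 1 = a₂ := by ring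
          rw [e]; linarith
        · rw [if_neg hd1]
          by_cases hd2 : φ 2 = d
          · rw [if_pos hd2]
            have e : (1:ℝ) * 1 * a₃ = a₃ := by ring
            rw [e]; linarith
          · exfalso
            obtain ⟨i, hi⟩ := hd
            fin_cases i
            · exact h0d hi
            · exact hd1 hi
            · exact hd2 hi
      · refine ⟨⟨1, h1⟩, ?_⟩
        intro d hd hdq
        have h1d : ¬ φ 1 = d := fun h => hdq (h.symm.trans h1)
        have h2d : ¬ φ 2 = d := fun h => hdq (h.symm.trans h2)
        have h0d : φ 0 = d := by
          obtain ⟨i, hi⟩ := hd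
          fin_cases i
          · exact hi
          · exact absurd hi h1d
          · exact absurd hi h2d
        rw [hblf, hblf, if_pos h0d, if_neg h1d, if_neg h2d, if_neg h0, if_pos h1, if_pos h2]
        linarith
  -- indicator identity
  have hind : ∀ φ : Fin 3 → Fin K, (if corr q ![p₁,p₂,p₃] φ then (1:ℝ) else 0) =
      (if φ 0 = q then (1:ℝ) else 0) * (1 - (if φ 1 = φ 2 ∧ ¬ φ 1 = q then (1:ℝ) else 0))
      + (1 - (if φ 0 = q then (1:ℝ) else 0)) *
          ((if φ 1 = q then (1:ℝ) else 0) * (if φ 2 = q then (1:ℝ) else 0)) := by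
    intro φ
    rw [if_congr (corr_iff φ) rfl rfl]
    exact ind_identity q (φ 0) (φ 1) (φ 2)
  have hwgt : ∀ φ : Fin 3 → Fin K, (∏ i, wgt K q (![p₁,p₂,p₃] i) (φ i)) =
      wgt K q p₁ (φ 0) * (wgt K q p₂ (φ 1) * wgt K q p₃ (φ 2)) := by
    intro φ
    rw [Fin.prod_univ_three]
    simp only [Matrix.cons_val_zero, Matrix.cons_val_one, Matrix.head_cons, Matrix.cons_val_two,
      Matrix.tail_cons, mul_assoc]
  have hW2 : ∑ b, wgt K q p₂ b = 1 := sum_wgt K hK q p₂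
  have hW3 : ∑ c, wgt K q p₃ c = 1 := sum_wgt K hK q p₃
  have hC3 : ∑ c, wgt K q p₃ c * (if c = q then (1:ℝ) else 0) = p₃ := sum_wgt_mul_ind K q p₃
  have hB2 : ∑ b, wgt K q p₂ b * (if b = q then (1:ℝ) else 0) = p₂ := sum_wgt_mul_ind K q p₂
  have hPA : PA K q ![p₁, p₂, p₃]
      = p₁ - p₁ * (1 - p₂) * (1 - p₃) / ((K : ℝ) - 1) + (1 - p₁) * p₂ * p₃ := by
    unfold PA
    calc (∑ φ : Fin 3 → Fin K, (∏ i, wgt K q (![p₁,p₂,p₃] i) (φ i)) *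
            (if corr q ![p₁,p₂,p₃] φ then 1 else 0))
        = ∑ φ : Fin 3 → Fin K,
            wgt K q p₁ (φ 0) * (wgt K q p₂ (φ 1) * wgt K q p₃ (φ 2)) *
            ((if φ 0 = q then (1:ℝ) else 0) *
                (1 - (if φ 1 = φ 2 ∧ ¬ φ 1 = q then (1:ℝ) else 0))
              + (1 - (if φ 0 = q then (1:ℝ) else 0)) *
                  ((if φ 1 = q then (1:ℝ) else 0) * (if φ 2 = q then (1:ℝ) else 0))) :=
          Finset.sum_congr rfl (fun φ _ => by rw [hwgt, hind])
      _ = ∑ a, ∑ b, ∑ c,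
            wgt K q p₁ a * (wgt K q p₂ b * wgt K q p₃ c) *
            ((if a = q then (1:ℝ) else 0) * (1 - (if b = c ∧ ¬ b = q then (1:ℝ) else 0))
              + (1 - (if a = q then (1:ℝ) else 0)) *
                  ((if b = q then (1:ℝ) else 0) * (if c = q then (1:ℝ) else 0))) :=
          sum_triple K (fun a b c =>
            wgt K q p₁ a * (wgt K q p₂ b * wgt K q p₃ c) *
            ((if a = q then (1:ℝ) else 0) * (1 - (if b = c ∧ ¬ b = q then (1:ℝ) else 0))
              + (1 - (if a = q then (1:ℝ) else 0)) *
                  ((if b = q then (1:ℝ) else 0) * (if c = q then (1:ℝ) else 0))))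
      _ = ∑ a, (wgt K q p₁ a * (if a = q then (1:ℝ) else 0) *
              (1 - (1-p₂)*(1-p₃)/((K:ℝ)-1))
            + wgt K q p₁ a * (1 - (if a = q then (1:ℝ) else 0)) * (p₂ * p₃)) := by
          refine Finset.sum_congr rfl (fun a _ => ?_)
          have hbstep : ∀ b : Fin K, (∑ c,
              wgt K q p₁ a * (wgt K q p₂ b * wgt K q p₃ c) *
              ((if a = q then (1:ℝ) else 0) * (1 - (if b = c ∧ ¬ b = q then (1:ℝ) else 0))
                + (1 - (if a = q then (1:ℝ) else 0)) *
                    ((if b = q then (1:ℝ) else 0) * (if c = q then (1:ℝ) else 0))))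
              = wgt K q p₁ a * (if a = q then (1:ℝ) else 0) * wgt K q p₂ b
                - wgt K q p₁ a * (if a = q then (1:ℝ) else 0) *
                    (wgt K q p₂ b * (if b = q then 0 else (1-p₃)/((K:ℝ)-1)))
                + (wgt K q p₁ a * (1 - (if a = q then (1:ℝ) else 0)) * p₃) *
                    (wgt K q p₂ b * (if b = q then (1:ℝ) else 0)) := by
            intro b
            calc (∑ c,
                wgt K q p₁ a * (wgt K q p₂ b * wgt K q p₃ c) *
                ((if a = q then (1:ℝ) else 0) * (1 - (if b = c ∧ ¬ b = q then (1:ℝ) else 0))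
                  + (1 - (if a = q then (1:ℝ) else 0)) *
                      ((if b = q then (1:ℝ) else 0) * (if c = q then (1:ℝ) else 0))))
                = ∑ c, ((wgt K q p₁ a * (if a = q then (1:ℝ) else 0) * wgt K q p₂ b) *
                      wgt K q p₃ c
                    - (wgt K q p₁ a * (if a = q then (1:ℝ) else 0) * wgt K q p₂ b) *
                      (wgt K q p₃ c * (if b = c ∧ ¬ b = q then (1:ℝ) else 0))
                    + (wgt K q p₁ a * (1 - (if a = q then (1:ℝ) else 0)) *
                        (wgt K q p₂ b * (if b = q then (1:ℝ) else 0))) *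
                      (wgt K q p₃ c * (if c = q then (1:ℝ) else 0))) :=
                  Finset.sum_congr rfl (fun c _ => by ring)
              _ = (wgt K q p₁ a * (if a = q then (1:ℝ) else 0) * wgt K q p₂ b) *
                      (∑ c, wgt K q p₃ c)
                  - (wgt K q p₁ a * (if a = q then (1:ℝ) else 0) * wgt K q p₂ b) *
                      (∑ c, wgt K q p₃ c * (if b = c ∧ ¬ b = q then (1:ℝ) else 0))
                  + (wgt K q p₁ a * (1 - (if a = q then (1:ℝ) else 0)) *
                        (wgt K q p₂ b * (if b = q then (1:ℝ) else 0))) *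
                      (∑ c, wgt K q p₃ c * (if c = q then (1:ℝ) else 0)) := by
                  rw [Finset.sum_add_distrib, Finset.sum_sub_distrib, ← Finset.mul_sum,
                    ← Finset.mul_sum, ← Finset.mul_sum]
              _ = _ := by
                  rw [hW3, hC3, sum_wgt_diagJ K q p₃ b]
                  ring
          calc (∑ b, ∑ c,
              wgt K q p₁ a * (wgt K q p₂ b * wgt K q p₃ c) *
              ((if a = q then (1:ℝ) else 0) * (1 - (if b = c ∧ ¬ b = q then (1:ℝ) else 0))
                + (1 - (if a = q then (1:ℝ) else 0)) *
                    ((if b = q then (1:ℝ) else 0) * (if c = q then (1:ℝ) else 0))))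
              = ∑ b, ((wgt K q p₁ a * (if a = q then (1:ℝ) else 0)) * wgt K q p₂ b
                - (wgt K q p₁ a * (if a = q then (1:ℝ) else 0)) *
                    (wgt K q p₂ b * (if b = q then 0 else (1-p₃)/((K:ℝ)-1)))
                + (wgt K q p₁ a * (1 - (if a = q then (1:ℝ) else 0)) * p₃) *
                    (wgt K q p₂ b * (if b = q then (1:ℝ) else 0))) :=
                Finset.sum_congr rfl (fun b _ => (hbstep b).trans (by ring))
            _ = (wgt K q p₁ a * (if a = q then (1:ℝ) else 0)) * (∑ b, wgt K q p₂ b)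
                - (wgt K q p₁ a * (if a = q then (1:ℝ) else 0)) *
                    (∑ b, wgt K q p₂ b * (if b = q then 0 else (1-p₃)/((K:ℝ)-1)))
                + (wgt K q p₁ a * (1 - (if a = q then (1:ℝ) else 0)) * p₃) *
                    (∑ b, wgt K q p₂ b * (if b = q then (1:ℝ) else 0)) := by
                rw [Finset.sum_add_distrib, Finset.sum_sub_distrib, ← Finset.mul_sum,
                  ← Finset.mul_sum, ← Finset.mul_sum]
            _ = _ := by
                rw [hW2, hB2, sum_wgt_off K hK q p₂ ((1-p₃)/((K:ℝ)-1))]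
                ring
      _ = (∑ a, wgt K q p₁ a * (if a = q then (1:ℝ) else 0)) *
              (1 - (1-p₂)*(1-p₃)/((K:ℝ)-1))
            + (∑ a, wgt K q p₁ a * (1 - (if a = q then (1:ℝ) else 0))) * (p₂ * p₃) := by
          rw [Finset.sum_add_distrib, Finset.sum_mul, Finset.sum_mul]
      _ = p₁ * (1 - (1-p₂)*(1-p₃)/((K:ℝ)-1)) + (1 - p₁) * (p₂ * p₃) := by
          rw [sum_wgt_mul_ind K q p₁, sum_wgt_mul_indne K hK q p₁]
      _ = p₁ - p₁ * (1 - p₂) * (1 - p₃) / ((K : ℝ) - 1) + (1 - p₁) * p₂ * p₃ := by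
          field_simp
  refine ⟨hPA, ?_⟩
  have h' : p₁ * (1 - p₂) * (1 - p₃) / ((K:ℝ)-1) < (1 - p₁) * p₂ * p₃ := by
    rw [div_lt_iff₀ hKpos]
    nlinarith
  linarith
end

section
/- The correctness probability function PA is not submodular: there exist K ≥ 2 and probabilities p₁,p₂,p₃ ∈ (0,1) with sets S = {l₁}, T = {l₁,l₂} such that PA(S ∪ {l₃}) - PA(S) < PA(T ∪ {l₃}) - PA(T). -/
open Finset
open scoped Classical

lemma sum1' (f : (Fin 1 → Fin 2) → ℝ) : ∑ φ : Fin 1 → Fin 2, f φ = f ![0] + f ![1] := by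
  rw [← (Fin.consEquiv (fun _ : Fin 1 => Fin 2)).sum_comp, Fintype.sum_prod_type]
  simp only [Fin.sum_univ_two, Fin.consEquiv, Equiv.coe_fn_mk,
    Subsingleton.elim (α := Fin 0 → Fin 2) _ ![], Matrix.vecCons,
    Finset.sum_const, Finset.card_univ, Fintype.card_pi]
  norm_num

lemma sum2' (f : (Fin 2 → Fin 2) → ℝ) :
    ∑ φ : Fin 2 → Fin 2, f φ = f ![0,0] + f ![0,1] + f ![1,0] + f ![1,1] := by
  rw [← (Fin.consEquiv (fun _ : Fin 2 => Fin 2)).sum_comp, Fintype.sum_prod_type]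
  simp only [Fin.sum_univ_two, Fin.consEquiv, Equiv.coe_fn_mk, Matrix.vecCons]
  rw [sum1' (fun φ => f (Fin.cons 0 φ)), sum1' (fun φ => f (Fin.cons 1 φ))]
  simp only [Matrix.vecCons]; ring

lemma sum3' (f : (Fin 3 → Fin 2) → ℝ) :
    ∑ φ : Fin 3 → Fin 2, f φ = f ![0,0,0] + f ![0,0,1] + f ![0,1,0] + f ![0,1,1]
      + f ![1,0,0] + f ![1,0,1] + f ![1,1,0] + f ![1,1,1] := by
  rw [← (Fin.consEquiv (fun _ : Fin 3 => Fin 2)).sum_comp, Fintype.sum_prod_type]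
  simp only [Fin.sum_univ_two, Fin.consEquiv, Equiv.coe_fn_mk, Matrix.vecCons]
  rw [sum2' (fun φ => f (Fin.cons 0 φ)), sum2' (fun φ => f (Fin.cons 1 φ))]
  simp only [Matrix.vecCons]; ring

/-- The correctness probability function is not submodular: there exist `K ≥ 2` and
success probabilities `p₁, p₂, p₃ ∈ (0,1)` such that, with `S = {l₁}` and `T = {l₁, l₂}`,
`PA(S ∪ {l₃}) - PA(S) < PA(T ∪ {l₃}) - PA(T)`. -/
theorem PA_not_submodular :
    ∃ (K : ℕ) (p₁ p₂ p₃ : ℝ), 2 ≤ K ∧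
      p₁ ∈ Set.Ioo (0 : ℝ) 1 ∧ p₂ ∈ Set.Ioo (0 : ℝ) 1 ∧ p₃ ∈ Set.Ioo (0 : ℝ) 1 ∧
      ∀ q : Fin K,
        PA K q ![p₁, p₃] - PA K q ![p₁] < PA K q ![p₁, p₂, p₃] - PA K q ![p₁, p₂] := by
  refine ⟨2, 3/5, 3/5, 3/5, le_refl 2, ⟨by norm_num, by norm_num⟩, ⟨by norm_num, by norm_num⟩,
    ⟨by norm_num, by norm_num⟩, ?_⟩
  intro q
  fin_cases q <;>
  · simp only [PA, sum1', sum2', sum3', corr, blf, wgt, Fin.exists_fin_two, Fin.forall_fin_two,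
      Fin.exists_fin_one, Fin.forall_fin_one, Fin.prod_univ_one, Fin.prod_univ_two,
      Fin.prod_univ_three, Fin.prod_univ_succ, Matrix.cons_val_zero, Matrix.cons_val_one,
      Matrix.head_cons, Matrix.cons_val_fin_one, Fin.isValue]
    norm_num [Fin.exists_fin_succ, Fin.forall_fin_succ, Fin.exists_fin_two, Fin.forall_fin_two,
      Matrix.cons_val_succ, Matrix.cons_val_zero, Fin.exists_fin_one, Fin.forall_fin_one,
        Matrix.cons_val_two, Matrix.tail_cons, Matrix.head_cons]
end
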